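/- For any policy π and transition kernels p, p': J_ρ(π,p) − J_ρ(π,p') = (1/(1−γ)) Σ_s d^{π,p'}_ρ(s) Σ_a π_{sa} Σ_{s'} (p_{sas'} − p'_{sas'}) (c_{sas'} + γ v^{π,p}_{s'}). -/

import Mathlib

lemma stoch_pow {S : Type*} [Fintype S] [DecidableEq S] (M : Matrix S S ℝ)
    (h0 : ∀ s s', 0 ≤ M s s') (h1 : ∀ s, ∑ s', M s s' = 1) :
    ∀ t : ℕ, (∀ s s', 0 ≤ (M ^ t) s s') ∧ (∀ s, ∑ s', (M ^ t) s s' = 1) := by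
  intro t
  induction t with
  | zero =>
    constructor
    · intro s s'
      simp [Matrix.one_apply]
      split <;> norm_num
    · intro s
      simp [Matrix.one_apply, Finset.sum_ite_eq]
  | succ n ih =>
    constructor
    · intro s s'
      rw [pow_succ, Matrix.mul_apply]
      exact Finset.sum_nonneg fun k _ => mul_nonneg (ih.1 s k) (h0 k s')
    · intro s
      simp only [pow_succ, Matrix.mul_apply]
      rw [Finset.sum_comm]
      calc ∑ k, ∑ s', (M ^ n) s k * M k s' = ∑ k, (M ^ n) s k * ∑ s', M k s' := by
            simp [Finset.mul_sum]
        _ = 1 := by simp [h1, ih.2 s]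

theorem stmt_9 {S A : Type*} [Fintype S] [Fintype A] [DecidableEq S]
    (γ : ℝ) (hγ : γ ∈ Set.Ioo (0 : ℝ) 1)
    (pol : S → A → ℝ) (p p' : S → A → S → ℝ) (c : S → A → S → ℝ) (ρ : S → ℝ)
    (hpol : ∀ s a, 0 ≤ pol s a) (hpol1 : ∀ s, ∑ a, pol s a = 1)
    (hp : ∀ s a s', 0 ≤ p s a s') (hp1 : ∀ s a, ∑ s', p s a s' = 1)
    (hp' : ∀ s a s', 0 ≤ p' s a s') (hp'1 : ∀ s a, ∑ s', p' s a s' = 1)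
    (hρ : ∀ s, 0 ≤ ρ s) (hρ1 : ∑ s, ρ s = 1)
    (v v' : S → ℝ)
    (hv : ∀ s, v s = ∑ a, pol s a * ∑ s', p s a s' * (c s a s' + γ * v s'))
    (hv' : ∀ s, v' s = ∑ a, pol s a * ∑ s', p' s a s' * (c s a s' + γ * v' s'))
    (d' : S → ℝ)
    (hd' : ∀ s', d' s' = (1 - γ) * ∑ s, ρ s *
      ∑' t : ℕ, γ ^ t * ((Matrix.of fun s₁ s₂ => ∑ a, pol s₁ a * p' s₁ a s₂) ^ t) s s') :
    (∑ s, ρ s * v s) - (∑ s, ρ s * v' s) =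
      (1 / (1 - γ)) * ∑ s, d' s * ∑ a, pol s a *
        ∑ s', (p s a s' - p' s a s') * (c s a s' + γ * v s') := by
  obtain ⟨hγ0, hγ1⟩ := hγ
  set M : Matrix S S ℝ := Matrix.of fun s₁ s₂ => ∑ a, pol s₁ a * p' s₁ a s₂ with hM
  set g : S → ℝ := fun s => ∑ a, pol s a *
      ∑ s', (p s a s' - p' s a s') * (c s a s' + γ * v s') with hg
  set w : S → ℝ := fun s => v s - v' s with hw
  -- basic facts about M
  have hM0 : ∀ s s', 0 ≤ M s s' := fun s s' =>
    Finset.sum_nonneg fun a _ => mul_nonneg (hpol s a) (hp' s a s')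
  have hM1 : ∀ s, ∑ s', M s s' = 1 := by
    intro s
    show (∑ s', ∑ a, pol s a * p' s a s') = 1
    rw [Finset.sum_comm]
    calc ∑ a, ∑ s', pol s a * p' s a s' = ∑ a, pol s a * ∑ s', p' s a s' := by
          simp [Finset.mul_sum]
      _ = 1 := by simp [hp'1, hpol1]
  have hpow := stoch_pow M hM0 hM1
  have hpowle : ∀ (t : ℕ) s s', (M ^ t) s s' ≤ 1 := by
    intro t s s'
    calc (M ^ t) s s' ≤ ∑ k, (M ^ t) s k :=
          Finset.single_le_sum (fun k _ => (hpow t).1 s k) (Finset.mem_univ s')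
      _ = 1 := (hpow t).2 s
  -- Bellman-type equation for w
  have hstep : ∀ s, w s = g s + γ * ∑ s', M s s' * w s' := by
    intro s
    show v s - v' s = _
    rw [hv s, hv' s]
    have key : (γ * ∑ s', M s s' * w s') = ∑ a, pol s a * ∑ s', γ * (p' s a s' * w s') := by
      show γ * ∑ s', (∑ a, pol s a * p' s a s') * w s' = _
      simp only [Finset.mul_sum, Finset.sum_mul]
      rw [Finset.sum_comm]
      exact Finset.sum_congr rfl fun a _ => Finset.sum_congr rfl fun s' _ => by ring
    rw [key, hg]
    rw [← Finset.sum_sub_distrib, ← Finset.sum_add_distrib]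
    refine Finset.sum_congr rfl fun a _ => ?_
    rw [← mul_sub, ← mul_add]
    congr 1
    rw [← Finset.sum_sub_distrib, ← Finset.sum_add_distrib]
    refine Finset.sum_congr rfl fun s' _ => ?_
    show p s a s' * (c s a s' + γ * v s') - p' s a s' * (c s a s' + γ * v' s')
      = (p s a s' - p' s a s') * (c s a s' + γ * v s') + γ * (p' s a s' * (v s' - v' s'))
    ring
  -- summand and its summability
  set u : ℕ → S → ℝ := fun t s => γ ^ t * ∑ s', (M ^ t) s s' * g s' with hu
  have hbd : ∀ (f : S → ℝ) (t : ℕ) (s : S),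
      |∑ s', (M ^ t) s s' * f s'| ≤ ∑ s', |f s'| := by
    intro f t s
    calc |∑ s', (M ^ t) s s' * f s'| ≤ ∑ s', |(M ^ t) s s' * f s'| :=
          Finset.abs_sum_le_sum_abs _ _
      _ ≤ ∑ s', |f s'| := by
          apply Finset.sum_le_sum
          intro s' _
          rw [abs_mul, abs_of_nonneg ((hpow t).1 s s')]
          calc (M ^ t) s s' * |f s'| ≤ 1 * |f s'| :=
                mul_le_mul_of_nonneg_right (hpowle t s s') (abs_nonneg _)
            _ = |f s'| := one_mul _
  have husum : ∀ s, Summable (fun t => u t s) := by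
    intro s
    apply Summable.of_norm_bounded (g := fun t => γ ^ t * ∑ s', |g s'|)
      ((summable_geometric_of_lt_one hγ0.le hγ1).mul_right _)
    intro t
    rw [hu]
    simp only [norm_mul, Real.norm_eq_abs, abs_pow, abs_of_nonneg hγ0.le]
    exact mul_le_mul_of_nonneg_left (hbd g t s) (pow_nonneg hγ0.le t)
  -- partial sums identity
  have hpart : ∀ (n : ℕ) s, ∑ t ∈ Finset.range n, u t s
      = w s - γ ^ n * ∑ s', (M ^ n) s s' * w s' := by
    intro n s
    induction n with
    | zero => simp [Matrix.one_apply, Finset.sum_ite_eq]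
    | succ n ih =>
      rw [Finset.sum_range_succ, ih]
      have key : ∑ s', (M ^ n) s s' * w s'
          = ∑ s', (M ^ n) s s' * g s' + γ * ∑ s', (M ^ (n + 1)) s s' * w s' := by
        calc ∑ s', (M ^ n) s s' * w s'
            = ∑ s', (M ^ n) s s' * (g s' + γ * ∑ s'', M s' s'' * w s'') := by
              refine Finset.sum_congr rfl fun s' _ => ?_
              rw [← hstep s']
          _ = ∑ s', (M ^ n) s s' * g s' + γ * ∑ s', ∑ s'', (M ^ n) s s' * (M s' s'' * w s'') := by
              simp only [mul_add, Finset.mul_sum, Finset.sum_add_distrib]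
              congr 1
              refine Finset.sum_congr rfl fun s' _ => ?_
              refine Finset.sum_congr rfl fun s'' _ => ?_
              ring
          _ = ∑ s', (M ^ n) s s' * g s' + γ * ∑ s', (M ^ (n + 1)) s s' * w s' := by
              congr 1
              rw [Finset.sum_comm]
              congr 1
              refine Finset.sum_congr rfl fun s'' _ => ?_
              rw [pow_succ, Matrix.mul_apply, Finset.sum_mul]
              exact Finset.sum_congr rfl fun s' _ => by ring
      simp only [hu]
      rw [key]
      ring
  -- limit of partial sums is w
  have hlim : ∀ s, Filter.Tendsto (fun n => ∑ t ∈ Finset.range n, u t s)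
      Filter.atTop (nhds (w s)) := by
    intro s
    have h1 : Filter.Tendsto (fun n : ℕ => γ ^ n * ∑ s', (M ^ n) s s' * w s')
        Filter.atTop (nhds 0) := by
      apply squeeze_zero_norm (a := fun n : ℕ => γ ^ n * ∑ s', |w s'|)
      · intro n
        simp only [norm_mul, Real.norm_eq_abs, abs_pow, abs_of_nonneg hγ0.le]
        exact mul_le_mul_of_nonneg_left (hbd w n s) (pow_nonneg hγ0.le n)
      · simpa using (tendsto_pow_atTop_nhds_zero_of_lt_one hγ0.le hγ1).mul_const (∑ s', |w s'|)
    have h2 := Filter.Tendsto.sub (tendsto_const_nhds (x := w s)) h1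
    simp only [sub_zero] at h2
    exact h2.congr fun n => (hpart n s).symm
  have htsum : ∀ s, ∑' t, u t s = w s := fun s =>
    tendsto_nhds_unique ((husum s).hasSum.tendsto_sum_nat) (hlim s)
  -- summability of entrywise series
  have hNsum : ∀ s s', Summable (fun t : ℕ => γ ^ t * (M ^ t) s s' * g s') := by
    intro s s'
    apply Summable.of_norm_bounded (g := fun t => γ ^ t * |g s'|)
      ((summable_geometric_of_lt_one hγ0.le hγ1).mul_right _)
    intro t
    have h0 := (hpow t).1 s s'
    have h1 := hpowle t s s'
    rw [Real.norm_eq_abs, abs_mul, abs_mul, abs_pow, abs_of_nonneg hγ0.le, abs_of_nonneg h0]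
    calc γ ^ t * (M ^ t) s s' * |g s'| ≤ γ ^ t * 1 * |g s'| :=
          mul_le_mul_of_nonneg_right
            (mul_le_mul_of_nonneg_left h1 (pow_nonneg hγ0.le t)) (abs_nonneg _)
      _ = γ ^ t * |g s'| := by ring
  -- the fundamental matrix applied to g gives w
  have hNg : ∀ s, ∑ s', (∑' t : ℕ, γ ^ t * (M ^ t) s s') * g s' = w s := by
    intro s
    rw [← htsum s]
    calc ∑ s', (∑' t : ℕ, γ ^ t * (M ^ t) s s') * g s'
        = ∑ s', ∑' t : ℕ, γ ^ t * (M ^ t) s s' * g s' := by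
          refine Finset.sum_congr rfl fun s' _ => ?_
          rw [tsum_mul_right]
      _ = ∑' t : ℕ, ∑ s', γ ^ t * (M ^ t) s s' * g s' :=
          (Summable.tsum_finsetSum fun s' _ => hNsum s s').symm
      _ = ∑' t, u t s := by
          refine tsum_congr fun t => ?_
          simp only [hu, Finset.mul_sum]
          exact Finset.sum_congr rfl fun s' _ => by ring
  -- conclude
  have h1γ : (1 : ℝ) - γ ≠ 0 := by linarith
  have hL : (∑ s, ρ s * v s) - (∑ s, ρ s * v' s) = ∑ s, ρ s * w s := by
    rw [← Finset.sum_sub_distrib]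
    exact Finset.sum_congr rfl fun s _ => by show _ = ρ s * (v s - v' s); ring
  rw [hL]
  calc ∑ s, ρ s * w s
      = ∑ s, ρ s * ∑ s', (∑' t : ℕ, γ ^ t * (M ^ t) s s') * g s' := by
        refine Finset.sum_congr rfl fun s _ => ?_
        rw [hNg s]
    _ = ∑ s, ∑ s', ρ s * ((∑' t : ℕ, γ ^ t * (M ^ t) s s') * g s') := by
        refine Finset.sum_congr rfl fun s _ => ?_
        rw [Finset.mul_sum]
    _ = ∑ s', (∑ s, ρ s * ∑' t : ℕ, γ ^ t * (M ^ t) s s') * g s' := by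
        rw [Finset.sum_comm]
        refine Finset.sum_congr rfl fun s' _ => ?_
        rw [Finset.sum_mul]
        exact Finset.sum_congr rfl fun s _ => by ring
    _ = (1 / (1 - γ)) * ∑ s', d' s' * g s' := by
        rw [Finset.mul_sum]
        refine Finset.sum_congr rfl fun s' _ => ?_
        rw [hd' s']
        field_simp
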